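/- (Restivo–Salemi factorization, infinite version.) Let P = {ε, 0, 00, 1, 11}. For every infinite binary overlap-free word x there exist a word p ∈ P and an infinite binary overlap-free word y such that x = p·μ(y). Moreover this factorization is unique: if p·μ(y) = p'·μ(y') with p, p' ∈ P and y, y' overlap-free, then p = p' and y = y'. -/

import Mathlib

/-- An overlap: a word of the form a x a x a, with `a` a single letter. -/
def Overlap (w : List (Fin 2)) : Prop :=
  ∃ (a : Fin 2) (x : List (Fin 2)), w = [a] ++ x ++ [a] ++ x ++ [a]

/-- `w` occurs as a (contiguous) factor of the infinite word `x`. -/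
def FactorOf (w : List (Fin 2)) (x : ℕ → Fin 2) : Prop :=
  ∃ i, w = (List.range w.length).map (fun j => x (i + j))

/-- An infinite binary word is overlap-free if no finite factor is an overlap. -/
def OverlapFree (x : ℕ → Fin 2) : Prop :=
  ∀ w, FactorOf w x → ¬ Overlap w

/-- The Thue–Morse morphism applied to an infinite word. -/
def mu (x : ℕ → Fin 2) : ℕ → Fin 2 :=
  fun n => if n % 2 = 0 then x (n / 2) else 1 - x (n / 2)

/-- Prepend a finite word to an infinite word. -/
def prepend (p : List (Fin 2)) (w : ℕ → Fin 2) : ℕ → Fin 2 :=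
  fun n => if h : n < p.length then p.get ⟨n, h⟩ else w (n - p.length)

/-- `x` begins with the finite word `p`. -/
def BeginsWith (x : ℕ → Fin 2) (p : List (Fin 2)) : Prop :=
  ∀ i < p.length, x i = p.getD i 0

/-- The set of possible prefixes in the Restivo--Salemi factorization. -/
def RS : Set (List (Fin 2)) := {[], [0], [0, 0], [1], [1, 1]}

/-- arithmetic version of containing an overlap -/
def HasOv (x : ℕ → Fin 2) : Prop :=
  ∃ i p, 1 ≤ p ∧ ∀ j ≤ p, x (i + j) = x (i + p + j)

lemma fin2_two_ne {a b c : Fin 2} (h1 : a ≠ b) (h2 : c ≠ b) : a = c := by omega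
lemma fin2_sub {a b : Fin 2} (h : a ≠ b) : b = 1 - a := by omega
lemma fin2_ne_sub (a : Fin 2) : a ≠ 1 - a := by omega

lemma mu_even (y : ℕ → Fin 2) (k : ℕ) : mu y (2*k) = y k := by
  simp [mu, Nat.mul_div_cancel_left, Nat.mul_mod_right]

lemma mu_odd (y : ℕ → Fin 2) (k : ℕ) : mu y (2*k+1) = 1 - y k := by
  have h1 : (2*k+1) % 2 = 1 := by omega
  have h2 : (2*k+1) / 2 = k := by omega
  simp [mu, h1, h2]

lemma mu_ne (y : ℕ → Fin 2) (k : ℕ) : mu y (2*k) ≠ mu y (2*k+1) := by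
  rw [mu_even, mu_odd]; exact fin2_ne_sub _

lemma prepend_add (p : List (Fin 2)) (w : ℕ → Fin 2) (n : ℕ) :
    prepend p w (p.length + n) = w n := by
  simp only [prepend]
  rw [dif_neg (by omega)]
  congr 1; omega

lemma hasOv_mu {y : ℕ → Fin 2} (h : HasOv y) : HasOv (mu y) := by
  obtain ⟨i, q, hq, hper⟩ := h
  refine ⟨2*i, 2*q, by omega, ?_⟩
  intro j hj
  rcases Nat.even_or_odd j with ⟨r, hr⟩ | ⟨r, hr⟩
  · have e1 : 2*i + j = 2*(i+r) := by omega
    have e2 : 2*i + 2*q + j = 2*(i+q+r) := by omega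
    rw [e1, e2, mu_even, mu_even]
    exact hper r (by omega)
  · have e1 : 2*i + j = 2*(i+r)+1 := by omega
    have e2 : 2*i + 2*q + j = 2*(i+q+r)+1 := by omega
    rw [e1, e2, mu_odd, mu_odd, hper r (by omega)]

lemma hasOv_prepend {w : ℕ → Fin 2} (p : List (Fin 2)) (h : HasOv w) :
    HasOv (prepend p w) := by
  obtain ⟨i, q, hq, hper⟩ := h
  refine ⟨p.length + i, q, hq, ?_⟩
  intro j hj
  have e1 : p.length + i + j = p.length + (i + j) := by omega
  have e2 : p.length + i + q + j = p.length + (i + q + j) := by omega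
  rw [e1, e2, prepend_add, prepend_add]
  exact hper j hj

example : True := trivial

lemma map_range_split (g : ℕ → Fin 2) (n m : ℕ) :
    (List.range (n+m)).map g = (List.range n).map g ++ (List.range m).map (fun j => g (n + j)) := by
  rw [List.range_add, List.map_append, List.map_map]
  rfl

lemma range_one_eq : List.range 1 = [0] := rfl

lemma hasOv_not_overlapFree {x : ℕ → Fin 2} (h : HasOv x) : ¬ OverlapFree x := by
  obtain ⟨i, p, hp, hper⟩ := h
  intro hOF
  set g : ℕ → Fin 2 := fun j => x (i + j) with hg
  set u : List (Fin 2) := (List.range p).map g with hu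
  set w : List (Fin 2) := (List.range (2*p+1)).map g with hwdef
  have hwl : w.length = 2*p+1 := by simp [hwdef]
  have hgpp : g (p + (p + 0)) = g 0 := by
    have h1 := hper p (by omega)
    have h2 := hper 0 (by omega)
    simp only [hg]
    rw [show i + (p + (p + 0)) = i + p + p by omega, ← h1]
    rw [show i + p = i + p + 0 by omega, ← h2]
  have hmid : (List.range p).map (fun j => g (p + j)) = u := by
    rw [hu]
    apply List.map_congr_left
    intro j hj
    rw [List.mem_range] at hj
    have := hper j (by omega)
    simp only [hg]
    rw [show i + (p + j) = i + p + j by omega]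
    exact this.symm
  have hw2 : w = u ++ u ++ [g 0] := by
    rw [hwdef, show 2*p+1 = p + (p + 1) by omega, map_range_split,
        map_range_split (fun j => g (p + j)) p 1, range_one_eq]
    simp only [List.map_cons, List.map_nil, hmid]
    rw [hgpp, ← List.append_assoc]
  have hu2 : u = g 0 :: (List.range (p-1)).map (fun j => g (1 + j)) := by
    rw [hu]
    conv_lhs => rw [show p = 1 + (p - 1) by omega]
    rw [map_range_split, range_one_eq]
    simp
  apply hOF w
  · exact ⟨i, by rw [hwl]⟩
  · refine ⟨g 0, (List.range (p-1)).map (fun j => g (1 + j)), ?_⟩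
    rw [hw2, hu2]
    simp

lemma hasOv_of_overlap_factor {x : ℕ → Fin 2} {w : List (Fin 2)}
    (hf : FactorOf w x) (ho : Overlap w) : HasOv x := by
  obtain ⟨a, t, hw⟩ := ho
  obtain ⟨i, hfac⟩ := hf
  set g : ℕ → Fin 2 := fun j => x (i + j) with hg
  set p : ℕ := t.length + 1 with hp
  have hwl : w.length = 2*p+1 := by rw [hw]; simp [hp]; omega
  have hw2 : w = (a :: t) ++ ((a :: t) ++ [a]) := by rw [hw]; simp
  have hfac2 : w = (List.range p).map g ++
      (((List.range p).map (fun j => g (p + j))) ++ [g (p + (p + 0))]) := by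
    rw [hfac, hwl, show 2*p+1 = p + (p + 1) by omega, map_range_split,
        map_range_split (fun j => g (p + j)) p 1, range_one_eq]
    simp
  have hlen : (a :: t).length = ((List.range p).map g).length := by simp [hp]
  have h1 := List.append_inj (hw2.symm.trans hfac2) hlen
  have h2 := List.append_inj h1.2 (by simp [hp])
  have hA : (a :: t) = (List.range p).map g := h1.1
  have hB : (a :: t) = (List.range p).map (fun j => g (p + j)) := h2.1
  have hC : a = g (p + (p + 0)) := by
    have := h2.2
    simpa using this
  have e3 : a = g 0 := by
    have := List.getElem_of_eq hA (show 0 < (a :: t).length by simp)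
    simpa using this
  have e4 : a = g (p + 0) := by
    have := List.getElem_of_eq hB (show 0 < (a :: t).length by simp)
    simpa using this
  refine ⟨i, p, by omega, ?_⟩
  intro j hj
  rcases Nat.lt_or_ge j p with hlt | hge
  · have := List.getElem_of_eq (hA.symm.trans hB)
      (show j < ((List.range p).map g).length by simp; omega)
    simp only [List.getElem_map, List.getElem_range] at this
    simpa [hg, show i + (p + j) = i + p + j by omega] using this
  · have hjp : j = p := by omega
    subst hjp
    have : g (p + 0) = g (p + (p + 0)) := e4.symm.trans hC
    simpa [hg, show i + (p + 0) = i + p by omega,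
      show i + (p + (p + 0)) = i + p + p by omega, Nat.add_assoc] using this

lemma overlapFree_iff {x : ℕ → Fin 2} : OverlapFree x ↔ ¬ HasOv x := by
  constructor
  · intro h hov
    exact hasOv_not_overlapFree hov h
  · intro h w hf ho
    exact h (hasOv_of_overlap_factor hf ho)

lemma xmn {x : ℕ → Fin 2} {m n m' n' : ℕ} (hm : m' = m) (hn : n' = n)
    (h : x m = x n) : x m' = x n' := by rw [hm, hn]; exact h

lemma no_cube {x : ℕ → Fin 2} (hno : ¬ HasOv x) (n : ℕ)
    (h1 : x n = x (n+1)) (h2 : x (n+1) = x (n+2)) : False := by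
  apply hno
  refine ⟨n, 1, by omega, ?_⟩
  intro j hj
  interval_cases j
  · exact xmn (by omega) (by omega) h1
  · exact xmn (by omega) (by omega) h2

lemma window {x : ℕ → Fin 2} (hno : ¬ HasOv x) (n : ℕ) :
    ∃ k ≤ 3, x (n+k) = x (n+k+1) := by
  by_contra h
  push_neg at h
  have d0 : x n ≠ x (n+1) := by have := h 0 (by omega); exact fun he => this (xmn (by omega) (by omega) he)
  have d1 : x (n+1) ≠ x (n+2) := by have := h 1 (by omega); exact fun he => this (xmn (by omega) (by omega) he)
  have d2 : x (n+2) ≠ x (n+3) := by have := h 2 (by omega); exact fun he => this (xmn (by omega) (by omega) he)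
  have d3 : x (n+3) ≠ x (n+4) := by have := h 3 (by omega); exact fun he => this (xmn (by omega) (by omega) he)
  apply hno
  refine ⟨n, 2, by omega, ?_⟩
  intro j hj
  have e0 : x n = x (n+2) := by omega
  have e1 : x (n+1) = x (n+3) := by omega
  have e2 : x (n+2) = x (n+4) := by omega
  interval_cases j
  · exact xmn (by omega) (by omega) e0
  · exact xmn (by omega) (by omega) e1
  · exact xmn (by omega) (by omega) e2

lemma break3 {x : ℕ → Fin 2} (hno : ¬ HasOv x) (m : ℕ)
    (h1 : x (m+1) = x (m+2)) (h2 : x (m+4) = x (m+5)) : False := by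
  have c0 : x m ≠ x (m+1) := fun he => no_cube hno m he h1
  have c1 : x (m+2) ≠ x (m+3) := fun he =>
    no_cube hno (m+1) (xmn (by omega) (by omega) h1) (xmn (by omega) (by omega) he)
  have c2 : x (m+3) ≠ x (m+4) := fun he =>
    no_cube hno (m+3) (xmn (by omega) (by omega) he) (xmn (by omega) (by omega) h2)
  have c3 : x (m+5) ≠ x (m+6) := fun he =>
    no_cube hno (m+4) (xmn (by omega) (by omega) h2) (xmn (by omega) (by omega) he)
  have e0 : x m = x (m+3) := by omega
  have e1 : x (m+1) = x (m+4) := by omega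
  have e2 : x (m+2) = x (m+5) := by omega
  have e3 : x (m+3) = x (m+6) := by omega
  apply hno
  refine ⟨m, 3, by omega, ?_⟩
  intro j hj
  interval_cases j
  · exact xmn (by omega) (by omega) e0
  · exact xmn (by omega) (by omega) e1
  · exact xmn (by omega) (by omega) e2
  · exact xmn (by omega) (by omega) e3

lemma parity {x : ℕ → Fin 2} (hno : ¬ HasOv x) :
    ∀ d n m, m = n + d → 1 ≤ n → 1 ≤ d → x n = x (n+1) → x m = x (m+1) →
      n % 2 = m % 2 := by
  intro d
  induction d using Nat.strong_induction_on with
  | _ d ih =>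
    intro n m hm h1 hd hSn hSm
    subst hm
    rcases Nat.lt_or_ge d 4 with hlt | hge
    · interval_cases d
      · exact (no_cube hno n hSn (xmn (by omega) (by omega) hSm)).elim
      · omega
      · obtain ⟨m', rfl⟩ : ∃ m', n = m' + 1 := ⟨n - 1, by omega⟩
        exact (break3 hno m' (xmn (by omega) (by omega) hSn)
          (xmn (by omega) (by omega) hSm)).elim
    · obtain ⟨k, hk, hSk⟩ := window hno (n+1)
      interval_cases k
      · exact (no_cube hno n hSn (xmn (by omega) (by omega) hSk)).elim
      · -- element at n+2
        have : (n+2) % 2 = (n+d) % 2 :=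
          ih (d-2) (by omega) (n+2) (n+d) (by omega) (by omega) (by omega)
            (xmn (by omega) (by omega) hSk) hSm
        omega
      · obtain ⟨m', rfl⟩ : ∃ m', n = m' + 1 := ⟨n - 1, by omega⟩
        exact (break3 hno m' (xmn (by omega) (by omega) hSn)
          (xmn (by omega) (by omega) hSk)).elim
      · -- element at n+4
        rcases Nat.lt_or_ge 4 d with h4 | h4
        · have : (n+4) % 2 = (n+d) % 2 :=
            ih (d-4) (by omega) (n+4) (n+d) (by omega) (by omega) (by omega)
              (xmn (by omega) (by omega) hSk) hSm
          omega
        · omega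

lemma rep {x : ℕ → Fin 2} (p : List (Fin 2))
    (hpre : ∀ i (h : i < p.length), x i = p.get ⟨i, h⟩)
    (hal : ∀ k, x (p.length + 2*k) ≠ x (p.length + 2*k + 1)) :
    x = prepend p (mu (fun k => x (p.length + 2*k))) := by
  funext n
  by_cases hn : n < p.length
  · rw [prepend, dif_pos hn]
    exact hpre n hn
  · rw [prepend, dif_neg hn]
    push_neg at hn
    rcases Nat.even_or_odd (n - p.length) with ⟨k, hk⟩ | ⟨k, hk⟩
    · rw [show n - p.length = 2*k by omega, mu_even]
      exact xmn (by omega) rfl rfl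
    · rw [show n - p.length = 2*k+1 by omega, mu_odd]
      have := fin2_sub (hal k)
      rw [← this]
      exact xmn (by omega) rfl rfl

lemma of_y {x y : ℕ → Fin 2} {p : List (Fin 2)} (hx : OverlapFree x)
    (he : x = prepend p (mu y)) : OverlapFree y := by
  rw [overlapFree_iff] at hx ⊢
  intro h
  exact hx (he ▸ hasOv_prepend p (hasOv_mu h))

lemma existence {x : ℕ → Fin 2} (hx : OverlapFree x) :
    ∃ p ∈ RS, ∃ y : ℕ → Fin 2, OverlapFree y ∧ x = prepend p (mu y) := by
  have hno : ¬ HasOv x := overlapFree_iff.mp hx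
  by_cases hodd : ∀ k, x (2*k+1) ≠ x (2*k+2)
  · -- prefix of length 1
    have hpre : ∀ i (h : i < ([x 0] : List (Fin 2)).length), x i = [x 0].get ⟨i, h⟩ := by
      intro i h
      have h0 : i = 0 := by simp at h; omega
      subst h0
      rfl
    have hal : ∀ k, x (([x 0] : List (Fin 2)).length + 2*k) ≠
        x (([x 0] : List (Fin 2)).length + 2*k + 1) := by
      intro k
      have := hodd k
      exact fun he => this (xmn (by simp; omega) (by simp; omega) he)
    have he := rep [x 0] hpre hal
    refine ⟨[x 0], ?_, _, of_y hx he, he⟩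
    rcases (by omega : x 0 = 0 ∨ x 0 = 1) with h | h <;> simp [RS, h]
  · push_neg at hodd
    obtain ⟨k0, hk0⟩ := hodd
    have heven : ∀ k, x (2*k+2) ≠ x (2*k+3) := by
      intro k heq
      have hSn : x (2*k0+1) = x (2*k0+1+1) := xmn rfl (by omega) hk0
      have hSm : x (2*k+2) = x (2*k+2+1) := xmn rfl (by omega) heq
      rcases Nat.lt_or_ge (2*k0+1) (2*k+2) with hlt | hge
      · have := parity hno (2*k+2 - (2*k0+1)) (2*k0+1) (2*k+2) (by omega) (by omega)
          (by omega) hSn hSm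
        omega
      · have := parity hno (2*k0+1 - (2*k+2)) (2*k+2) (2*k0+1) (by omega) (by omega)
          (by omega) hSm hSn
        omega
    by_cases hx01 : x 0 = x 1
    · -- prefix of length 2
      have hpre : ∀ i (h : i < ([x 0, x 1] : List (Fin 2)).length),
          x i = [x 0, x 1].get ⟨i, h⟩ := by
        intro i h
        have h0 : i = 0 ∨ i = 1 := by simp at h; omega
        rcases h0 with rfl | rfl <;> rfl
      have hal : ∀ k, x (([x 0, x 1] : List (Fin 2)).length + 2*k) ≠
          x (([x 0, x 1] : List (Fin 2)).length + 2*k + 1) := by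
        intro k
        exact fun he => heven k (xmn (by simp; omega) (by simp; omega) he)
      have he := rep [x 0, x 1] hpre hal
      refine ⟨[x 0, x 1], ?_, _, of_y hx he, he⟩
      rcases (by omega : x 0 = 0 ∨ x 0 = 1) with h | h <;>
        simp [RS, h, ← hx01]
    · -- empty prefix
      have hpre : ∀ i (h : i < ([] : List (Fin 2)).length), x i = [].get ⟨i, h⟩ := by
        intro i h
        simp at h
      have hal : ∀ k, x (([] : List (Fin 2)).length + 2*k) ≠
          x (([] : List (Fin 2)).length + 2*k + 1) := by
        intro k
        rcases Nat.eq_zero_or_pos k with rfl | hk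
        · exact fun he => hx01 (xmn (by simp) (by simp) he)
        · exact fun he => heven (k-1) (xmn (by simp; omega) (by simp; omega) he)
      have he := rep [] hpre hal
      exact ⟨[], by simp [RS], _, of_y hx he, he⟩

lemma prepend_nil (w : ℕ → Fin 2) : prepend [] w = w := by
  funext n
  simp [prepend]

lemma not_of_alt {y : ℕ → Fin 2} (h : ∀ k, y (k+1) = y k) : ¬ OverlapFree y := by
  apply hasOv_not_overlapFree
  refine ⟨0, 1, by omega, ?_⟩
  intro j hj
  interval_cases j
  · exact xmn (by omega) (by omega) (h 0).symm
  · exact xmn (by omega) (by omega) (h 1).symm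

lemma xmn2 {f g : ℕ → Fin 2} {m n m' n' : ℕ} (hm : m' = m) (hn : n' = n)
    (h : f m = g n) : f m' = g n' := by rw [hm, hn]; exact h

lemma helperA {y y' : ℕ → Fin 2} {a : Fin 2} (hy : OverlapFree y)
    (h : mu y = prepend [a] (mu y')) : False := by
  have hsh : ∀ n, mu y (1 + n) = mu y' n := by
    intro n
    have := congrFun h (1 + n)
    rw [show 1 + n = ([a] : List (Fin 2)).length + n from rfl] at this
    rwa [prepend_add] at this
  have hall : ∀ n, mu y n ≠ mu y (n+1) := by
    intro n
    rcases Nat.even_or_odd n with ⟨k, hk⟩ | ⟨k, hk⟩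
    · intro he
      exact mu_ne y k (xmn (by omega) (by omega) he)
    · intro he
      have e1 : mu y (2*k+1) = mu y' (2*k) := xmn2 (by omega) (by omega) (hsh (2*k))
      have e2 : mu y (2*k+2) = mu y' (2*k+1) := xmn2 (by omega) (by omega) (hsh (2*k+1))
      have he2 : mu y (2*k+1) = mu y (2*k+2) := xmn (by omega) (by omega) he
      exact mu_ne y' k (by rw [← e1, ← e2, ← he2])
  apply not_of_alt (y := y) ?_ hy
  intro k
  have d1 := hall (2*k)
  have d2 := hall (2*k+1)
  have : mu y (2*k+2) = mu y (2*k) := by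
    have d2' : mu y (2*k+2) ≠ mu y (2*k+1) := fun he => d2 (xmn rfl (by omega) he.symm)
    omega
  have e1 : mu y (2*(k+1)) = mu y (2*k) := xmn (by omega) rfl this
  rw [mu_even, mu_even] at e1
  exact e1

lemma helperB {y y' : ℕ → Fin 2} {a b : Fin 2} (hy' : OverlapFree y')
    (h : prepend [a] (mu y) = prepend [b, b] (mu y')) : False := by
  have h1 : ∀ n, prepend [a] (mu y) (1 + n) = mu y n := by
    intro n
    rw [show 1 + n = ([a] : List (Fin 2)).length + n from rfl, prepend_add]
  have h2 : ∀ n, prepend [a] (mu y) (2 + n) = mu y' n := by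
    intro n
    have := congrFun h (2 + n)
    rw [show 2 + n = ([b, b] : List (Fin 2)).length + n from rfl] at this
    rwa [prepend_add] at this
  set x := prepend [a] (mu y) with hxd
  have halt : ∀ n, 1 ≤ n → x n ≠ x (n+1) := by
    intro n hn he
    rcases Nat.even_or_odd n with ⟨k, hk⟩ | ⟨k, hk⟩
    · -- n = 2k with k ≥ 1 : n = 2 + (2(k-1)), n+1 = 2 + (2(k-1)+1)
      have e1 : x n = mu y' (2*(k-1)) := xmn2 (by omega) rfl (h2 (2*(k-1)))
      have e2 : x (n+1) = mu y' (2*(k-1)+1) := xmn2 (by omega) rfl (h2 (2*(k-1)+1))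
      exact mu_ne y' (k-1) (by rw [← e1, ← e2]; exact he)
    · -- n = 2k+1 = 1 + 2k
      have e1 : x n = mu y (2*k) := xmn2 (by omega) rfl (h1 (2*k))
      have e2 : x (n+1) = mu y (2*k+1) := xmn2 (by omega) rfl (h1 (2*k+1))
      exact mu_ne y k (by rw [← e1, ← e2]; exact he)
  apply not_of_alt (y := y') ?_ hy'
  intro k
  have ey : ∀ m, y' m = x (2 + 2*m) := by
    intro m
    have := h2 (2*m)
    rw [mu_even] at this
    exact this.symm
  rw [ey k, ey (k+1)]
  have d1 := halt (2+2*k) (by omega)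
  have d2 := halt (2+2*k+1) (by omega)
  have d2' : x (2+2*(k+1)) ≠ x (2+2*k+1) := fun he => d2 (xmn (by omega) (by omega) he.symm)
  omega

lemma helperC {y y' : ℕ → Fin 2} {b : Fin 2}
    (h : mu y = prepend [b, b] (mu y')) : False := by
  have h0 := congrFun h 0
  have h1 := congrFun h 1
  rw [prepend, dif_pos (by simp)] at h0
  rw [prepend, dif_pos (by simp)] at h1
  simp at h0 h1
  have : mu y 0 ≠ mu y 1 := by
    have := mu_ne y 0
    exact fun he => this (xmn (by omega) (by omega) he)
  rw [h0, h1] at this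
  exact this rfl

lemma same_p {y y' : ℕ → Fin 2} (p : List (Fin 2))
    (h : prepend p (mu y) = prepend p (mu y')) : y = y' := by
  funext k
  have := congrFun h (p.length + 2*k)
  rw [prepend_add, prepend_add, mu_even, mu_even] at this
  exact this


theorem restivo_salemi_factorization :
    (∀ x : ℕ → Fin 2, OverlapFree x →
      ∃ p ∈ RS, ∃ y : ℕ → Fin 2, OverlapFree y ∧ x = prepend p (mu y)) ∧
    (∀ p ∈ RS, ∀ p' ∈ RS, ∀ y y' : ℕ → Fin 2, OverlapFree y → OverlapFree y' →
      prepend p (mu y) = prepend p' (mu y') → p = p' ∧ y = y') := by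
  constructor
  · exact fun x hx => existence hx
  · intro p hp p' hp' y y' hy hy' heq
    have hp5 : p = [] ∨ p = [0] ∨ p = [0,0] ∨ p = [1] ∨ p = [1,1] := by
      simpa [RS] using hp
    have hp5' : p' = [] ∨ p' = [0] ∨ p' = [0,0] ∨ p' = [1] ∨ p' = [1,1] := by
      simpa [RS] using hp'
    rcases hp5 with rfl | rfl | rfl | rfl | rfl <;>
      rcases hp5' with rfl | rfl | rfl | rfl | rfl <;>
      first
      | exact ⟨rfl, same_p _ heq⟩
      | exact (helperA hy (by rwa [prepend_nil] at heq)).elim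
      | exact (helperA hy' (by rw [prepend_nil] at heq; exact heq.symm)).elim
      | exact (helperC (by rwa [prepend_nil] at heq)).elim
      | exact (helperC (by rw [prepend_nil] at heq; exact heq.symm)).elim
      | exact (helperB hy' heq).elim
      | exact (helperB hy heq.symm).elim
      | (have z := congrFun heq 0; simp [prepend] at z)
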